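/- arXiv:0811.1803 — 2 statements merged into one kernel-verified Lean document; each statement's English description precedes it below -/
import Mathlib

section
/- Geometric frequency lemma: if ξ₁+ξ₂+ξ₃+ξ₄ = 0 in ℝ², |ξ₁| ∼ |ξ₂| ∼ N₁ ≥ |ξ₃| ∼ N₃ ≫ |ξ₄| ∼ N₄, and |cos∠(ξ₁+ξ₂, ξ₁+ξ₄)| ≤ θ, then |cos∠(ξ₁,ξ₃)| ≤ C(θ + N₄/N₃). -/
open scoped RealInnerProductSpace

/-- **geometric frequency lemma.** If `ξ₁+ξ₂+ξ₃+ξ₄ = 0` in `ℝ²`,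
`|ξ₁| ∼ |ξ₂| ∼ N₁ ≥ |ξ₃| ∼ N₃ ≫ |ξ₄| ∼ N₄`, and `|cos∠(ξ₁+ξ₂, ξ₁+ξ₄)| ≤ θ`
(`0 < θ ≪ 1`), then `|cos∠(ξ₁,ξ₃)| ≤ C(θ + N₄/N₃)`. -/
theorem cos_angle_frequency_bound :
    ∃ C : ℝ, 0 < C ∧
      ∀ (N₁ N₃ N₄ θ : ℝ), 0 < N₄ → N₄ ≤ N₃ → N₃ ≤ N₁ → 100 * N₄ ≤ N₃ →
        0 < θ → θ ≤ 1 / 100 →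
      ∀ ξ₁ ξ₂ ξ₃ ξ₄ : EuclideanSpace ℝ (Fin 2),
        ξ₁ + ξ₂ + ξ₃ + ξ₄ = 0 →
        N₁ ≤ ‖ξ₁‖ → ‖ξ₁‖ ≤ 2 * N₁ →
        N₁ ≤ ‖ξ₂‖ → ‖ξ₂‖ ≤ 2 * N₁ →
        N₃ ≤ ‖ξ₃‖ → ‖ξ₃‖ ≤ 2 * N₃ →
        N₄ ≤ ‖ξ₄‖ → ‖ξ₄‖ ≤ 2 * N₄ →
        |(⟪ξ₁ + ξ₂, ξ₁ + ξ₄⟫ : ℝ) / (‖ξ₁ + ξ₂‖ * ‖ξ₁ + ξ₄‖)| ≤ θ →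
        |(⟪ξ₁, ξ₃⟫ : ℝ) / (‖ξ₁‖ * ‖ξ₃‖)| ≤ C * (θ + N₄ / N₃) := by
  refine ⟨16, by norm_num, ?_⟩
  intro N₁ N₃ N₄ θ hN₄ h43 h31 h100 hθ hθ1 ξ₁ ξ₂ ξ₃ ξ₄ hsum h1l h1u h2l h2u h3l h3u h4l h4u hcos
  have hN₃ : 0 < N₃ := lt_of_lt_of_le hN₄ h43
  have hN₁ : 0 < N₁ := lt_of_lt_of_le hN₃ h31
  have hn1 : 0 < ‖ξ₁‖ := lt_of_lt_of_le hN₁ h1l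
  have hn3 : 0 < ‖ξ₃‖ := lt_of_lt_of_le hN₃ h3l
  have hn4 : 0 < ‖ξ₄‖ := lt_of_lt_of_le hN₄ h4l
  -- ξ₁ + ξ₂ = -(ξ₃ + ξ₄)
  have hadd : (ξ₁ + ξ₂) + (ξ₃ + ξ₄) = 0 := by rw [← hsum]; abel
  have hs : ξ₁ + ξ₂ = -(ξ₃ + ξ₄) := eq_neg_of_add_eq_zero_left hadd
  -- key algebraic identity
  have key : (⟪ξ₁, ξ₃⟫ : ℝ) =
      -(⟪ξ₁ + ξ₂, ξ₁ + ξ₄⟫ : ℝ) - ⟪ξ₃, ξ₄⟫ - ⟪ξ₄, ξ₁⟫ - ⟪ξ₄, ξ₄⟫ := by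
    rw [hs]
    simp only [inner_neg_left, inner_add_left, inner_add_right]
    rw [real_inner_comm ξ₃ ξ₁]
    ring
  -- bound on the first term: |⟪ξ₁+ξ₂, ξ₁+ξ₄⟫| ≤ θ * ‖ξ₁+ξ₂‖ * ‖ξ₁+ξ₄‖
  have hIP : |(⟪ξ₁ + ξ₂, ξ₁ + ξ₄⟫ : ℝ)| ≤ θ * (‖ξ₁ + ξ₂‖ * ‖ξ₁ + ξ₄‖) := by
    rcases eq_or_lt_of_le (mul_nonneg (norm_nonneg (ξ₁ + ξ₂)) (norm_nonneg (ξ₁ + ξ₄))) with h | h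
    · rcases mul_eq_zero.mp h.symm with h0 | h0
      · rw [norm_eq_zero.mp h0, inner_zero_left]
        simpa using mul_nonneg hθ.le (mul_nonneg (norm_nonneg _) (norm_nonneg _))
      · rw [norm_eq_zero.mp h0, inner_zero_right]
        simpa using mul_nonneg hθ.le (mul_nonneg (norm_nonneg _) (norm_nonneg _))
    · rw [abs_div] at hcos
      rw [abs_of_pos h] at hcos
      exact (div_le_iff₀ h).mp hcos
  -- norm bounds for the sums
  have hns : ‖ξ₁ + ξ₂‖ ≤ 4 * N₃ := by
    rw [hs, norm_neg]
    calc ‖ξ₃ + ξ₄‖ ≤ ‖ξ₃‖ + ‖ξ₄‖ := norm_add_le _ _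
      _ ≤ 4 * N₃ := by linarith
  have hnt : ‖ξ₁ + ξ₄‖ ≤ 4 * N₁ := by
    calc ‖ξ₁ + ξ₄‖ ≤ ‖ξ₁‖ + ‖ξ₄‖ := norm_add_le _ _
      _ ≤ 4 * N₁ := by linarith
  have h34 : |(⟪ξ₃, ξ₄⟫ : ℝ)| ≤ 4 * (N₃ * N₄) := by
    calc |(⟪ξ₃, ξ₄⟫ : ℝ)| ≤ ‖ξ₃‖ * ‖ξ₄‖ := abs_real_inner_le_norm _ _
      _ ≤ (2 * N₃) * (2 * N₄) := mul_le_mul h3u h4u hn4.le (by linarith)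
      _ = 4 * (N₃ * N₄) := by ring
  have h41 : |(⟪ξ₄, ξ₁⟫ : ℝ)| ≤ 4 * (N₁ * N₄) := by
    calc |(⟪ξ₄, ξ₁⟫ : ℝ)| ≤ ‖ξ₄‖ * ‖ξ₁‖ := abs_real_inner_le_norm _ _
      _ ≤ (2 * N₄) * (2 * N₁) := mul_le_mul h4u h1u hn1.le (by linarith)
      _ = 4 * (N₁ * N₄) := by ring
  have h44 : |(⟪ξ₄, ξ₄⟫ : ℝ)| ≤ 4 * (N₄ * N₄) := by
    calc |(⟪ξ₄, ξ₄⟫ : ℝ)| ≤ ‖ξ₄‖ * ‖ξ₄‖ := abs_real_inner_le_norm _ _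
      _ ≤ (2 * N₄) * (2 * N₄) := mul_le_mul h4u h4u hn4.le (by linarith)
      _ = 4 * (N₄ * N₄) := by ring
  have hIP' : |(⟪ξ₁ + ξ₂, ξ₁ + ξ₄⟫ : ℝ)| ≤ θ * (16 * (N₁ * N₃)) := by
    refine hIP.trans (mul_le_mul_of_nonneg_left ?_ hθ.le)
    calc ‖ξ₁ + ξ₂‖ * ‖ξ₁ + ξ₄‖ ≤ (4 * N₃) * (4 * N₁) :=
        mul_le_mul hns hnt (norm_nonneg _) (by linarith)
      _ = 16 * (N₁ * N₃) := by ring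
  have habs : |(⟪ξ₁, ξ₃⟫ : ℝ)| ≤ 16 * θ * (N₁ * N₃) + 12 * (N₁ * N₄) := by
    obtain ⟨a1, a2⟩ := abs_le.mp hIP'
    obtain ⟨b1, b2⟩ := abs_le.mp h34
    obtain ⟨c1, c2⟩ := abs_le.mp h41
    obtain ⟨d1, d2⟩ := abs_le.mp h44
    have hn34 : N₃ * N₄ ≤ N₁ * N₄ := mul_le_mul_of_nonneg_right h31 hN₄.le
    have hn44 : N₄ * N₄ ≤ N₁ * N₄ := mul_le_mul_of_nonneg_right (h43.trans h31) hN₄.le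
    rw [key, abs_le]
    constructor <;> linarith
  -- conclude
  have hpos : 0 < ‖ξ₁‖ * ‖ξ₃‖ := mul_pos hn1 hn3
  rw [abs_div, abs_of_pos hpos, div_le_iff₀ hpos]
  have hN13 : N₁ * N₃ ≤ ‖ξ₁‖ * ‖ξ₃‖ := mul_le_mul h1l h3l hN₃.le hn1.le
  have hratio : N₁ * N₄ = (N₄ / N₃) * (N₁ * N₃) := by field_simp
  have hfin : 16 * θ * (N₁ * N₃) + 12 * (N₁ * N₄) ≤ 16 * (θ + N₄ / N₃) * (‖ξ₁‖ * ‖ξ₃‖) := by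
    rw [hratio]
    have hr : 0 < N₄ / N₃ := div_pos hN₄ hN₃
    nlinarith [mul_le_mul_of_nonneg_left hN13 hθ.le, mul_le_mul_of_nonneg_left hN13 hr.le]
  linarith [habs, hfin]
end

section
/- Sextilinear symbol bound: if the quadrilinear symbol σ₄ satisfies |σ₄(ξ₁,…,ξ₄)| ≤ C min(m(ξ₁),…,m(ξ₄))²/θ, then ν₆(ξ₁,…,ξ₆) := -i Σ_{k=1}^{4} (-1)^{k+1} σ₄(ξ₁,…,ξ_k+ξ_{k+1}+ξ_{k+2},ξ_{k+3},…,ξ₆) satisfies |ν₆| ≤ C' m²(N₄*)/θ, where N₁* ≥ … ≥ N₆* are the ordered magnitudes of the ξⱼ and ξ₁+…+ξ₆ = 0. -/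
private lemma fin6_mem_of_ne (a b c j₁ j₂ j₃ k : Fin 6) (hab : a≠b) (hac : a≠c) (hbc : b≠c)
    (h12 : j₁≠j₂) (h13 : j₁≠j₃) (h23 : j₂≠j₃)
    (x1 : j₁≠a) (x2 : j₁≠b) (x3 : j₁≠c) (y1 : j₂≠a) (y2 : j₂≠b) (y3 : j₂≠c)
    (z1 : j₃≠a) (z2 : j₃≠b) (z3 : j₃≠c)
    (hk1 : k≠j₁) (hk2 : k≠j₂) (hk3 : k≠j₃) : k=a∨k=b∨k=c := by
  have c1 : ({j₁,j₂,j₃} : Finset (Fin 6)).card = 3 := by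
    rw [Finset.card_insert_of_notMem (by simp [h12, h13]),
      Finset.card_insert_of_notMem (by simp [h23]), Finset.card_singleton]
  have c2 : ({a,b,c} : Finset (Fin 6)).card = 3 := by
    rw [Finset.card_insert_of_notMem (by simp [hab, hac]),
      Finset.card_insert_of_notMem (by simp [hbc]), Finset.card_singleton]
  have hdisj : Disjoint ({j₁,j₂,j₃} : Finset (Fin 6)) {a,b,c} := by
    rw [Finset.disjoint_left]
    intro x hx hx'
    simp only [Finset.mem_insert, Finset.mem_singleton] at hx hx'
    rcases hx with rfl|rfl|rfl <;> rcases hx' with rfl|rfl|rfl <;> simp_all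
  have huniv : ({j₁,j₂,j₃} : Finset (Fin 6)) ∪ {a,b,c} = Finset.univ := by
    apply Finset.eq_univ_of_card
    rw [Finset.card_union_of_disjoint hdisj, c1, c2]
    simp
  have hk : k ∈ ({j₁,j₂,j₃} : Finset (Fin 6)) ∪ {a,b,c} := huniv ▸ Finset.mem_univ k
  simp only [Finset.mem_union, Finset.mem_insert, Finset.mem_singleton] at hk
  tauto

/-- **sextilinear symbol bound.** If the quadrilinear symbol `σ₄`
satisfies `|σ₄(η₁,…,η₄)| ≤ C₀ min(m(η₁),…,m(η₄))²/θ` (with `m` radial nonincreasing,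
`0 ≤ m ≤ 1`), then, with `ξ₁+⋯+ξ₆ = 0` and `M = N₄*` the fourth largest of the
magnitudes `|ξⱼ|` (three of the frequencies have magnitude `≥ M`, the remaining ones
have magnitude `≤ M`, with `M` attained), the symbol
`ν₆ = -i Σ_{k=1}^4 (-1)^{k+1} σ₄(ξ₁,…,ξ_k+ξ_{k+1}+ξ_{k+2},…,ξ₆)`
satisfies `|ν₆| ≤ C' C₀ m(M)²/θ` for an absolute constant `C'`. -/
theorem nu6_symbol_bound :
    ∃ C' : ℝ, 0 < C' ∧
      ∀ (θ C₀ : ℝ), 0 < θ → 0 < C₀ →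
      ∀ m : ℝ → ℝ,
        AntitoneOn m (Set.Ici (0 : ℝ)) →
        (∀ r : ℝ, 0 ≤ r → 0 ≤ m r ∧ m r ≤ 1) →
      ∀ σ₄ : EuclideanSpace ℝ (Fin 2) → EuclideanSpace ℝ (Fin 2) →
          EuclideanSpace ℝ (Fin 2) → EuclideanSpace ℝ (Fin 2) → ℂ,
        (∀ a b c d, ‖σ₄ a b c d‖
            ≤ C₀ * (min (min (m ‖a‖) (m ‖b‖)) (min (m ‖c‖) (m ‖d‖))) ^ 2 / θ) →
      ∀ ξ₁ ξ₂ ξ₃ ξ₄ ξ₅ ξ₆ : EuclideanSpace ℝ (Fin 2),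
        ξ₁ + ξ₂ + ξ₃ + ξ₄ + ξ₅ + ξ₆ = 0 →
      ∀ M : ℝ, 0 ≤ M →
        (∀ j₁ j₂ j₃ : Fin 6, j₁ ≠ j₂ → j₁ ≠ j₃ → j₂ ≠ j₃ →
          (∀ i : Fin 6, i = j₁ ∨ i = j₂ ∨ i = j₃ →
            M ≤ ‖(![ξ₁, ξ₂, ξ₃, ξ₄, ξ₅, ξ₆]) i‖) →
          (∀ k : Fin 6, k ≠ j₁ → k ≠ j₂ → k ≠ j₃ →
            ‖(![ξ₁, ξ₂, ξ₃, ξ₄, ξ₅, ξ₆]) k‖ ≤ M) →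
          (∃ k : Fin 6, k ≠ j₁ ∧ k ≠ j₂ ∧ k ≠ j₃ ∧
            ‖(![ξ₁, ξ₂, ξ₃, ξ₄, ξ₅, ξ₆]) k‖ = M) →
          ‖-Complex.I *
              (σ₄ (ξ₁ + ξ₂ + ξ₃) ξ₄ ξ₅ ξ₆
                - σ₄ ξ₁ (ξ₂ + ξ₃ + ξ₄) ξ₅ ξ₆
                + σ₄ ξ₁ ξ₂ (ξ₃ + ξ₄ + ξ₅) ξ₆
                - σ₄ ξ₁ ξ₂ ξ₃ (ξ₄ + ξ₅ + ξ₆))‖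
            ≤ C' * C₀ * (m M) ^ 2 / θ) := by
  refine ⟨4, by norm_num, ?_⟩
  intro θ C₀ hθ hC₀ m hmono hm01 σ₄ hσ ξ₁ ξ₂ ξ₃ ξ₄ ξ₅ ξ₆ hsum M hM j₁ j₂ j₃ h12 h13 h23 hbig hsmall hex
  set v : Fin 6 → EuclideanSpace ℝ (Fin 2) := ![ξ₁, ξ₂, ξ₃, ξ₄, ξ₅, ξ₆] with hv
  -- key analytic bound
  have key : ∀ a b c d : EuclideanSpace ℝ (Fin 2),
      (M ≤ ‖a‖ ∨ M ≤ ‖b‖ ∨ M ≤ ‖c‖ ∨ M ≤ ‖d‖) →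
      ‖σ₄ a b c d‖ ≤ C₀ * (m M) ^ 2 / θ := by
    intro a b c d h
    refine (hσ a b c d).trans ?_
    have hmin0 : 0 ≤ min (min (m ‖a‖) (m ‖b‖)) (min (m ‖c‖) (m ‖d‖)) := by
      have := (hm01 ‖a‖ (norm_nonneg a)).1
      have := (hm01 ‖b‖ (norm_nonneg b)).1
      have := (hm01 ‖c‖ (norm_nonneg c)).1
      have := (hm01 ‖d‖ (norm_nonneg d)).1
      simp only [le_min_iff]; tauto
    have hminM : min (min (m ‖a‖) (m ‖b‖)) (min (m ‖c‖) (m ‖d‖)) ≤ m M := by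
      rcases h with h | h | h | h
      · exact le_trans (le_trans (min_le_left _ _) (min_le_left _ _))
          (hmono (Set.mem_Ici.2 hM) (Set.mem_Ici.2 (hM.trans h)) h)
      · exact le_trans (le_trans (min_le_left _ _) (min_le_right _ _))
          (hmono (Set.mem_Ici.2 hM) (Set.mem_Ici.2 (hM.trans h)) h)
      · exact le_trans (le_trans (min_le_right _ _) (min_le_left _ _))
          (hmono (Set.mem_Ici.2 hM) (Set.mem_Ici.2 (hM.trans h)) h)
      · exact le_trans (le_trans (min_le_right _ _) (min_le_right _ _))
          (hmono (Set.mem_Ici.2 hM) (Set.mem_Ici.2 (hM.trans h)) h)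
    have hsq : (min (min (m ‖a‖) (m ‖b‖)) (min (m ‖c‖) (m ‖d‖))) ^ 2 ≤ (m M) ^ 2 :=
      pow_le_pow_left₀ hmin0 hminM 2
    exact (div_le_div_iff_of_pos_right hθ).2 (by nlinarith)
  -- combinatorial picking lemma
  have pick : ∀ a b c : Fin 6, a ≠ b → a ≠ c → b ≠ c →
      (M ≤ ‖v a‖ ∨ M ≤ ‖v b‖ ∨ M ≤ ‖v c‖) := by
    intro a b c hab hac hbc
    by_cases h1 : j₁ = a ∨ j₁ = b ∨ j₁ = c
    · rcases h1 with h | h | h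
      · exact Or.inl (by subst h; exact hbig j₁ (Or.inl rfl))
      · exact Or.inr (Or.inl (by subst h; exact hbig j₁ (Or.inl rfl)))
      · exact Or.inr (Or.inr (by subst h; exact hbig j₁ (Or.inl rfl)))
    by_cases h2 : j₂ = a ∨ j₂ = b ∨ j₂ = c
    · rcases h2 with h | h | h
      · exact Or.inl (by subst h; exact hbig j₂ (Or.inr (Or.inl rfl)))
      · exact Or.inr (Or.inl (by subst h; exact hbig j₂ (Or.inr (Or.inl rfl))))
      · exact Or.inr (Or.inr (by subst h; exact hbig j₂ (Or.inr (Or.inl rfl))))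
    by_cases h3 : j₃ = a ∨ j₃ = b ∨ j₃ = c
    · rcases h3 with h | h | h
      · exact Or.inl (by subst h; exact hbig j₃ (Or.inr (Or.inr rfl)))
      · exact Or.inr (Or.inl (by subst h; exact hbig j₃ (Or.inr (Or.inr rfl))))
      · exact Or.inr (Or.inr (by subst h; exact hbig j₃ (Or.inr (Or.inr rfl))))
    push_neg at h1 h2 h3
    obtain ⟨k, hk1, hk2, hk3, hkM⟩ := hex
    have hk : k = a ∨ k = b ∨ k = c :=
      fin6_mem_of_ne a b c j₁ j₂ j₃ k hab hac hbc h12 h13 h23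
        h1.1 h1.2.1 h1.2.2 h2.1 h2.2.1 h2.2.2 h3.1 h3.2.1 h3.2.2 hk1 hk2 hk3
    rcases hk with h | h | h
    · exact Or.inl (by subst h; exact hkM.ge)
    · exact Or.inr (Or.inl (by subst h; exact hkM.ge))
    · exact Or.inr (Or.inr (by subst h; exact hkM.ge))
  have hv0 : v 0 = ξ₁ := rfl
  have hv1 : v 1 = ξ₂ := rfl
  have hv2 : v 2 = ξ₃ := rfl
  have hv3 : v 3 = ξ₄ := rfl
  have hv4 : v 4 = ξ₅ := rfl
  have hv5 : v 5 = ξ₆ := rfl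
  have B1 : ‖σ₄ (ξ₁ + ξ₂ + ξ₃) ξ₄ ξ₅ ξ₆‖ ≤ C₀ * (m M) ^ 2 / θ := by
    refine key _ _ _ _ ?_
    have := pick 3 4 5 (by decide) (by decide) (by decide)
    rw [hv3, hv4, hv5] at this
    tauto
  have B2 : ‖σ₄ ξ₁ (ξ₂ + ξ₃ + ξ₄) ξ₅ ξ₆‖ ≤ C₀ * (m M) ^ 2 / θ := by
    refine key _ _ _ _ ?_
    have := pick 0 4 5 (by decide) (by decide) (by decide)
    rw [hv0, hv4, hv5] at this
    tauto
  have B3 : ‖σ₄ ξ₁ ξ₂ (ξ₃ + ξ₄ + ξ₅) ξ₆‖ ≤ C₀ * (m M) ^ 2 / θ := by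
    refine key _ _ _ _ ?_
    have := pick 0 1 5 (by decide) (by decide) (by decide)
    rw [hv0, hv1, hv5] at this
    tauto
  have B4 : ‖σ₄ ξ₁ ξ₂ ξ₃ (ξ₄ + ξ₅ + ξ₆)‖ ≤ C₀ * (m M) ^ 2 / θ := by
    refine key _ _ _ _ ?_
    have := pick 0 1 2 (by decide) (by decide) (by decide)
    rw [hv0, hv1, hv2] at this
    tauto
  have hnorm : ‖-Complex.I * (σ₄ (ξ₁ + ξ₂ + ξ₃) ξ₄ ξ₅ ξ₆
        - σ₄ ξ₁ (ξ₂ + ξ₃ + ξ₄) ξ₅ ξ₆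
        + σ₄ ξ₁ ξ₂ (ξ₃ + ξ₄ + ξ₅) ξ₆
        - σ₄ ξ₁ ξ₂ ξ₃ (ξ₄ + ξ₅ + ξ₆))‖
      ≤ ‖σ₄ (ξ₁ + ξ₂ + ξ₃) ξ₄ ξ₅ ξ₆‖ + ‖σ₄ ξ₁ (ξ₂ + ξ₃ + ξ₄) ξ₅ ξ₆‖
        + ‖σ₄ ξ₁ ξ₂ (ξ₃ + ξ₄ + ξ₅) ξ₆‖ + ‖σ₄ ξ₁ ξ₂ ξ₃ (ξ₄ + ξ₅ + ξ₆)‖ := by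
    rw [norm_mul, norm_neg, Complex.norm_I, one_mul]
    calc ‖_ - _ + _ - _‖ ≤ ‖_ - _ + _‖ + ‖_‖ := norm_sub_le _ _
      _ ≤ (‖_ - _‖ + ‖_‖) + ‖_‖ := by gcongr; exact norm_add_le _ _
      _ ≤ ((‖_‖ + ‖_‖) + ‖_‖) + ‖_‖ := by gcongr; exact norm_sub_le _ _
  refine hnorm.trans ?_
  have : (4 : ℝ) * C₀ * (m M) ^ 2 / θ = C₀ * (m M) ^ 2 / θ + C₀ * (m M) ^ 2 / θ
      + C₀ * (m M) ^ 2 / θ + C₀ * (m M) ^ 2 / θ := by ring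
  rw [this]
  gcongr
end
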